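/- The pretentious distance D(f, g; x), defined by D(f,g;x)^2 = Σ_{p ≤ x} (1 − Re(f(p)·conj(g(p))))/p for functions f, g from the primes to the closed unit disk, satisfies the triangle inequality D(f, h; x) ≤ D(f, g; x) + D(g, h; x). -/

import Mathlib

private lemma key_poly (a b c d e f : ℝ) (h1 : a^2+b^2 ≤ 1) (h2 : c^2+d^2 ≤ 1)
    (h3 : e^2+f^2 ≤ 1) :
    ((a*e+b*f) + (e*c+f*d) - 1 - (a*c+b*d))^2
      ≤ 4 * (1 - (a*e+b*f)) * (1 - (e*c+f*d)) := by
  nlinarith [mul_nonneg (by linarith : (0:ℝ) ≤ 1-a^2-b^2) (by positivity : (0:ℝ) ≤ (e-c)^2+(f-d)^2),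
    mul_nonneg (by linarith : (0:ℝ) ≤ 1-c^2-d^2) (by positivity : (0:ℝ) ≤ (a-e)^2+(b-f)^2),
    mul_nonneg (by linarith : (0:ℝ) ≤ 1-e^2-f^2) (by positivity : (0:ℝ) ≤ (a-c)^2+(b-d)^2),
    mul_nonneg (by linarith : (0:ℝ) ≤ 1-a^2-b^2) (by linarith : (0:ℝ) ≤ 1-c^2-d^2),
    mul_nonneg (by linarith : (0:ℝ) ≤ 1-a^2-b^2) (by linarith : (0:ℝ) ≤ 1-e^2-f^2),
    mul_nonneg (by linarith : (0:ℝ) ≤ 1-c^2-d^2) (by linarith : (0:ℝ) ≤ 1-e^2-f^2),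
    sq_nonneg ((a-e)*(f-d)-(b-f)*(e-c))]

/-- Pointwise triangle inequality on the unit disk for η(w,y) = √(1 - Re(w ȳ)). -/
private lemma eta_triangle (w y z : ℂ) (hw : ‖w‖ ≤ 1) (hy : ‖y‖ ≤ 1) (hz : ‖z‖ ≤ 1) :
    Real.sqrt (1 - (w * starRingEnd ℂ y).re)
      ≤ Real.sqrt (1 - (w * starRingEnd ℂ z).re)
        + Real.sqrt (1 - (z * starRingEnd ℂ y).re) := by
  set A : ℝ := (w * starRingEnd ℂ z).re with hA
  set B : ℝ := (z * starRingEnd ℂ y).re with hB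
  set C : ℝ := (w * starRingEnd ℂ y).re with hC
  have h1 : w.re^2 + w.im^2 ≤ 1 := by
    have h' : ‖w‖ ≤ 1 := hw
    nlinarith [norm_nonneg w, Complex.normSq_apply w, Complex.sq_norm w]
  have h2 : y.re^2 + y.im^2 ≤ 1 := by
    have h' : ‖y‖ ≤ 1 := hy
    nlinarith [norm_nonneg y, Complex.normSq_apply y, Complex.sq_norm y]
  have h3 : z.re^2 + z.im^2 ≤ 1 := by
    have h' : ‖z‖ ≤ 1 := hz
    nlinarith [norm_nonneg z, Complex.normSq_apply z, Complex.sq_norm z]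
  have hAv : A = w.re * z.re + w.im * z.im := by
    simp [hA, Complex.mul_re, Complex.conj_re, Complex.conj_im]
  have hBv : B = z.re * y.re + z.im * y.im := by
    simp [hB, Complex.mul_re, Complex.conj_re, Complex.conj_im]
  have hCv : C = w.re * y.re + w.im * y.im := by
    simp [hC, Complex.mul_re, Complex.conj_re, Complex.conj_im]
  have key : (A + B - 1 - C)^2 ≤ 4 * (1 - A) * (1 - B) := by
    rw [hAv, hBv, hCv]
    have := key_poly w.re w.im y.re y.im z.re z.im h1 h2 h3
    convert this using 2
  have hA1 : A ≤ 1 := by rw [hAv]; nlinarith [sq_nonneg (w.re - z.re), sq_nonneg (w.im - z.im)]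
  have hB1 : B ≤ 1 := by rw [hBv]; nlinarith [sq_nonneg (z.re - y.re), sq_nonneg (z.im - y.im)]
  have hC1 : C ≤ 1 := by rw [hCv]; nlinarith [sq_nonneg (w.re - y.re), sq_nonneg (w.im - y.im)]
  have hAn : (0:ℝ) ≤ 1 - A := by linarith
  have hBn : (0:ℝ) ≤ 1 - B := by linarith
  have hCn : (0:ℝ) ≤ 1 - C := by linarith
  have hst : A + B - 1 - C ≤ 2 * Real.sqrt (1-A) * Real.sqrt (1-B) := by
    calc A + B - 1 - C ≤ |A + B - 1 - C| := le_abs_self _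
      _ = Real.sqrt ((A + B - 1 - C)^2) := (Real.sqrt_sq_eq_abs _).symm
      _ ≤ Real.sqrt (4 * (1-A) * (1-B)) := Real.sqrt_le_sqrt key
      _ = 2 * Real.sqrt (1-A) * Real.sqrt (1-B) := by
          rw [show 4 * (1-A) * (1-B) = (2 * Real.sqrt (1-A) * Real.sqrt (1-B))^2 by
            rw [mul_pow, mul_pow, Real.sq_sqrt hAn, Real.sq_sqrt hBn]; ring]
          exact Real.sqrt_sq (by positivity)
  have hsq : 1 - C ≤ (Real.sqrt (1-A) + Real.sqrt (1-B))^2 := by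
    have e1 := Real.sq_sqrt hAn; have e2 := Real.sq_sqrt hBn
    nlinarith [hst]
  calc Real.sqrt (1 - C) ≤ Real.sqrt ((Real.sqrt (1-A) + Real.sqrt (1-B))^2) :=
        Real.sqrt_le_sqrt hsq
    _ = Real.sqrt (1-A) + Real.sqrt (1-B) := Real.sqrt_sq (by positivity)

/-- Minkowski-type inequality for finite sums. -/
private lemma sqrt_sum_le {ι : Type*} (s : Finset ι) (a b c : ι → ℝ)
    (ha : ∀ i ∈ s, 0 ≤ a i) (hb : ∀ i ∈ s, 0 ≤ b i) (hc : ∀ i ∈ s, 0 ≤ c i)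
    (hpt : ∀ i ∈ s, Real.sqrt (c i) ≤ Real.sqrt (a i) + Real.sqrt (b i)) :
    Real.sqrt (∑ i ∈ s, c i) ≤ Real.sqrt (∑ i ∈ s, a i) + Real.sqrt (∑ i ∈ s, b i) := by
  have hSa : (0:ℝ) ≤ ∑ i ∈ s, a i := Finset.sum_nonneg ha
  have hSb : (0:ℝ) ≤ ∑ i ∈ s, b i := Finset.sum_nonneg hb
  have hcs : ∑ i ∈ s, Real.sqrt (a i) * Real.sqrt (b i)
      ≤ Real.sqrt (∑ i ∈ s, a i) * Real.sqrt (∑ i ∈ s, b i) := by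
    have hcs0 := Real.sum_mul_le_sqrt_mul_sqrt s (fun i => Real.sqrt (a i))
      (fun i => Real.sqrt (b i))
    have ea : ∑ i ∈ s, (Real.sqrt (a i))^2 = ∑ i ∈ s, a i :=
      Finset.sum_congr rfl fun i hi => Real.sq_sqrt (ha i hi)
    have eb : ∑ i ∈ s, (Real.sqrt (b i))^2 = ∑ i ∈ s, b i :=
      Finset.sum_congr rfl fun i hi => Real.sq_sqrt (hb i hi)
    simpa [ea, eb] using hcs0
  have hterm : ∀ i ∈ s, c i ≤ a i + b i + 2 * (Real.sqrt (a i) * Real.sqrt (b i)) := by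
    intro i hi
    have h2 := hpt i hi
    have e1 := Real.sq_sqrt (ha i hi)
    have e2 := Real.sq_sqrt (hb i hi)
    have e3 := Real.sq_sqrt (hc i hi)
    nlinarith [Real.sqrt_nonneg (a i), Real.sqrt_nonneg (b i), Real.sqrt_nonneg (c i)]
  have hsum : ∑ i ∈ s, c i
      ≤ (Real.sqrt (∑ i ∈ s, a i) + Real.sqrt (∑ i ∈ s, b i))^2 := by
    have h1 : ∑ i ∈ s, c i
        ≤ ∑ i ∈ s, (a i + b i + 2 * (Real.sqrt (a i) * Real.sqrt (b i))) :=
      Finset.sum_le_sum hterm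
    have ea := Real.sq_sqrt hSa
    have eb := Real.sq_sqrt hSb
    rw [Finset.sum_add_distrib, Finset.sum_add_distrib, ← Finset.mul_sum] at h1
    nlinarith [hcs]
  calc Real.sqrt (∑ i ∈ s, c i)
      ≤ Real.sqrt ((Real.sqrt (∑ i ∈ s, a i) + Real.sqrt (∑ i ∈ s, b i))^2) :=
        Real.sqrt_le_sqrt hsum
    _ = _ := Real.sqrt_sq (by positivity)

theorem pretentious_distance_triangle (x : ℝ) (hx : 2 ≤ x) (f g h : ℕ → ℂ)
    (hf : ∀ p : ℕ, p.Prime → (p : ℝ) ≤ x → ‖f p‖ ≤ 1)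
    (hg : ∀ p : ℕ, p.Prime → (p : ℝ) ≤ x → ‖g p‖ ≤ 1)
    (hh : ∀ p : ℕ, p.Prime → (p : ℝ) ≤ x → ‖h p‖ ≤ 1) :
    Real.sqrt (∑ p ∈ (Finset.range (⌊x⌋₊ + 1)).filter Nat.Prime,
        (1 - (f p * starRingEnd ℂ (h p)).re) / p)
      ≤ Real.sqrt (∑ p ∈ (Finset.range (⌊x⌋₊ + 1)).filter Nat.Prime,
          (1 - (f p * starRingEnd ℂ (g p)).re) / p)
        + Real.sqrt (∑ p ∈ (Finset.range (⌊x⌋₊ + 1)).filter Nat.Prime,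
            (1 - (g p * starRingEnd ℂ (h p)).re) / p) := by
  set s := (Finset.range (⌊x⌋₊ + 1)).filter Nat.Prime with hs
  have hmem : ∀ p ∈ s, p.Prime ∧ (p:ℝ) ≤ x := by
    intro p hp
    rw [hs, Finset.mem_filter, Finset.mem_range] at hp
    refine ⟨hp.2, ?_⟩
    have h1 : p ≤ ⌊x⌋₊ := Nat.lt_succ_iff.mp hp.1
    calc (p:ℝ) ≤ (⌊x⌋₊ : ℝ) := Nat.cast_le.mpr h1
      _ ≤ x := Nat.floor_le (by linarith)
  have re_le : ∀ (u v : ℂ), ‖u‖ ≤ 1 → ‖v‖ ≤ 1 → (u * starRingEnd ℂ v).re ≤ 1 := by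
    intro u v hu hv
    calc (u * starRingEnd ℂ v).re ≤ ‖u * starRingEnd ℂ v‖ := Complex.re_le_norm _
      _ = ‖u‖ * ‖v‖ := by rw [norm_mul, RingHomIsometric.norm_map]
      _ ≤ 1 := by nlinarith [norm_nonneg u, norm_nonneg v]
  have nn : ∀ (u v : ℂ), ‖u‖ ≤ 1 → ‖v‖ ≤ 1 → ∀ p : ℕ,
      0 ≤ (1 - (u * starRingEnd ℂ v).re) / p := by
    intro u v hu hv p
    apply div_nonneg _ (Nat.cast_nonneg p)
    linarith [re_le u v hu hv]
  apply sqrt_sum_le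
  · intro p hp
    exact nn _ _ (hf p (hmem p hp).1 (hmem p hp).2) (hg p (hmem p hp).1 (hmem p hp).2) p
  · intro p hp
    exact nn _ _ (hg p (hmem p hp).1 (hmem p hp).2) (hh p (hmem p hp).1 (hmem p hp).2) p
  · intro p hp
    exact nn _ _ (hf p (hmem p hp).1 (hmem p hp).2) (hh p (hmem p hp).1 (hmem p hp).2) p
  · intro p hp
    obtain ⟨hprime, hpx⟩ := hmem p hp
    have h1 : ‖f p‖ ≤ 1 := hf p hprime hpx
    have h2 : ‖g p‖ ≤ 1 := hg p hprime hpx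
    have h3 : ‖h p‖ ≤ 1 := hh p hprime hpx
    have key := eta_triangle (f p) (h p) (g p) h1 h3 h2
    have hC : 0 ≤ 1 - (f p * starRingEnd ℂ (h p)).re := by linarith [re_le _ _ h1 h3]
    have hA : 0 ≤ 1 - (f p * starRingEnd ℂ (g p)).re := by linarith [re_le _ _ h1 h2]
    have hB : 0 ≤ 1 - (g p * starRingEnd ℂ (h p)).re := by linarith [re_le _ _ h2 h3]
    rw [Real.sqrt_div hC, Real.sqrt_div hA, Real.sqrt_div hB, ← add_div]
    gcongr
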